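/- Let F : ℝ² → ℝ² be an invertible affine map, F(x̂) = J x̂ + b with J an invertible linear map. Given a differentiable map v̂ : ℝ² → ℝ², define its Piola transform v : ℝ² → ℝ² by v(x) = (1/|det J|) · J (v̂(F⁻¹(x))). Then the divergence is preserved up to the Jacobian factor: for every x̂ ∈ ℝ², (div v)(F(x̂)) = (1/|det J|) · (div v̂)(x̂). In particular, v̂ is divergence-free if and only if v is divergence-free. -/

import Mathlib

open scoped RealInnerProductSpace

/-- The divergence of a map `w : ℝ² → ℝ²` at `x`: the trace of its Fréchet derivative. -/
noncomputable def div2 (w : EuclideanSpace ℝ (Fin 2) → EuclideanSpace ℝ (Fin 2))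
    (x : EuclideanSpace ℝ (Fin 2)) : ℝ :=
  LinearMap.trace ℝ (EuclideanSpace ℝ (Fin 2))
    (fderiv ℝ w x : EuclideanSpace ℝ (Fin 2) →ₗ[ℝ] EuclideanSpace ℝ (Fin 2))

/-- Let `F(x̂) = J x̂ + b` be an invertible affine map of the plane and
let `v` be the Piola transform `v(F(x̂)) = |det J|⁻¹ J (v̂(x̂))` of a differentiable map
`v̂`.  Then `(div v)(F(x̂)) = |det J|⁻¹ (div v̂)(x̂)` for all `x̂`; in particular `v̂` is
divergence-free iff `v` is. -/
theorem piola_preserves_divergence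
    (J : EuclideanSpace ℝ (Fin 2) →L[ℝ] EuclideanSpace ℝ (Fin 2))
    (b : EuclideanSpace ℝ (Fin 2))
    (hJ : LinearMap.det (J : EuclideanSpace ℝ (Fin 2) →ₗ[ℝ] EuclideanSpace ℝ (Fin 2)) ≠ 0)
    (vhat v : EuclideanSpace ℝ (Fin 2) → EuclideanSpace ℝ (Fin 2))
    (hdiff : Differentiable ℝ vhat)
    (hv : ∀ xhat, v (J xhat + b) =
      |LinearMap.det (J : EuclideanSpace ℝ (Fin 2) →ₗ[ℝ] EuclideanSpace ℝ (Fin 2))|⁻¹ •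
        J (vhat xhat)) :
    (∀ xhat, div2 v (J xhat + b) =
      |LinearMap.det (J : EuclideanSpace ℝ (Fin 2) →ₗ[ℝ] EuclideanSpace ℝ (Fin 2))|⁻¹ *
        div2 vhat xhat) ∧
    ((∀ xhat, div2 vhat xhat = 0) ↔ (∀ x, div2 v x = 0)) := by
  set c : ℝ := |LinearMap.det (J : EuclideanSpace ℝ (Fin 2) →ₗ[ℝ]
      EuclideanSpace ℝ (Fin 2))|⁻¹ with hc
  have hc0 : c ≠ 0 := by simp [hc, abs_eq_zero, hJ]
  let el : EuclideanSpace ℝ (Fin 2) ≃ₗ[ℝ] EuclideanSpace ℝ (Fin 2) :=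
    LinearMap.equivOfDetNeZero (J : EuclideanSpace ℝ (Fin 2) →ₗ[ℝ] _) hJ
  let e : EuclideanSpace ℝ (Fin 2) ≃L[ℝ] EuclideanSpace ℝ (Fin 2) :=
    el.toContinuousLinearEquiv
  have he : ∀ y, e y = J y := fun y => rfl
  have hes : ∀ x, J (e.symm x) = x := fun x => by
    rw [← he]; exact e.apply_symm_apply x
  have hsymm : ∀ xhat, e.symm (J xhat + b - b) = xhat := fun xhat => by
    rw [add_sub_cancel_right, ← he, e.symm_apply_apply]
  have hvx : ∀ x, v x = c • J (vhat (e.symm (x - b))) := by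
    intro x
    have := hv (e.symm (x - b))
    rwa [hes, sub_add_cancel] at this
  have key : ∀ x : EuclideanSpace ℝ (Fin 2), HasFDerivAt v
      (c • J.comp ((fderiv ℝ vhat (e.symm (x - b))).comp
        (e.symm : EuclideanSpace ℝ (Fin 2) →L[ℝ] EuclideanSpace ℝ (Fin 2)))) x := by
    intro x
    have h1 : HasFDerivAt (fun y : EuclideanSpace ℝ (Fin 2) => e.symm (y - b))
        (e.symm : EuclideanSpace ℝ (Fin 2) →L[ℝ] EuclideanSpace ℝ (Fin 2)) x := by
      have := ((e.symm : EuclideanSpace ℝ (Fin 2) →L[ℝ]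
          EuclideanSpace ℝ (Fin 2)).hasFDerivAt (x := x - b)).comp x
        ((hasFDerivAt_id x).sub_const b)
      rw [ContinuousLinearMap.comp_id] at this
      exact this
    have h2 := ((hdiff (e.symm (x - b))).hasFDerivAt).comp x h1
    have h3 := (J.hasFDerivAt).comp x h2
    have h4 := h3.const_smul c
    exact h4.congr_of_eventuallyEq (Filter.Eventually.of_forall fun y => hvx y)
  have main : ∀ xhat, div2 v (J xhat + b) = c * div2 vhat xhat := by
    intro xhat
    have hd := (key (J xhat + b)).fderiv
    rw [hsymm] at hd
    rw [div2, hd]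
    have h0 : ((J.comp ((fderiv ℝ vhat xhat).comp
        (e.symm : EuclideanSpace ℝ (Fin 2) →L[ℝ] EuclideanSpace ℝ (Fin 2))) :
        EuclideanSpace ℝ (Fin 2) →L[ℝ] EuclideanSpace ℝ (Fin 2)) :
        EuclideanSpace ℝ (Fin 2) →ₗ[ℝ] EuclideanSpace ℝ (Fin 2)) =
        el.conj (fderiv ℝ vhat xhat :
          EuclideanSpace ℝ (Fin 2) →ₗ[ℝ] EuclideanSpace ℝ (Fin 2)) := by
      ext w
      simp [LinearEquiv.conj_apply]
      rfl
    rw [ContinuousLinearMap.coe_smul, h0, map_smul, LinearMap.trace_conj']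
    rfl
  refine ⟨main, ?_, ?_⟩
  · intro h x
    have hx : J (e.symm (x - b)) + b = x := by rw [hes, sub_add_cancel]
    have := main (e.symm (x - b))
    rw [hx, h] at this
    simpa using this
  · intro h xhat
    have := main xhat
    rw [h] at this
    exact (mul_eq_zero.mp this.symm).resolve_left hc0
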